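/- Let K ≥ 2 and c = m/K with 1 ≤ m ≤ K−1. The expectation of the discretized equal-revenue distribution P_{c,K} satisfies c·(ln((K+1)/(m+1)) + 1) ≤ E[P_{c,K}] ≤ c·(ln(K/m) + 1). -/

import Mathlib

/-- Discretized equal-revenue distribution with parameter `c = m/K`,
given as a mass function on grid indices `i` (price `i/K`). -/
noncomputable def derd (K m : ℕ) : ℕ → ℝ := fun i =>
  if i = K then (m : ℝ) / K
  else if m ≤ i ∧ i ≤ K - 1 then ((m : ℝ) / K) * ((K : ℝ) / i - (K : ℝ) / (i + 1))
  else 0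

lemma derd_telescope (f : ℕ → ℝ) {m n : ℕ} (h : m ≤ n) :
    ∑ i ∈ Finset.Ico m n, (f (i + 1) - f i) = f n - f m := by
  rw [Finset.sum_Ico_eq_sub _ h, Finset.sum_range_sub, Finset.sum_range_sub]
  ring

/-- The expectation of the discretized equal-revenue distribution satisfies
`c·(ln((K+1)/(m+1)) + 1) ≤ E[P_{c,K}] ≤ c·(ln(K/m) + 1)`. -/
theorem derd_expectation_bounds (K m : ℕ) (hK : 2 ≤ K) (hm1 : 1 ≤ m) (hmK : m ≤ K - 1) :
    ((m : ℝ) / K) * (Real.log (((K : ℝ) + 1) / ((m : ℝ) + 1)) + 1)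
      ≤ ∑ i ∈ Finset.range (K + 1), ((i : ℝ) / K) * derd K m i ∧
    ∑ i ∈ Finset.range (K + 1), ((i : ℝ) / K) * derd K m i
      ≤ ((m : ℝ) / K) * (Real.log ((K : ℝ) / m) + 1) := by
  have hmK' : m < K := by omega
  have hK0 : (0:ℝ) < K := by positivity
  have hm0 : (0:ℝ) < m := by exact_mod_cast hm1
  have hsum : ∑ i ∈ Finset.range (K + 1), ((i : ℝ) / K) * derd K m i
      = ((m : ℝ) / K) * ((∑ i ∈ Finset.Ico m K, (1:ℝ) / ((i:ℝ) + 1)) + 1) := by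
    rw [Finset.sum_range_succ]
    have h1 : ((K:ℝ) / K) * derd K m K = (m:ℝ) / K := by
      simp only [derd, if_pos rfl]
      rw [if_true]
      field_simp
    have h2 : ∑ i ∈ Finset.range K, ((i : ℝ) / K) * derd K m i
        = ∑ i ∈ Finset.Ico m K, ((m:ℝ) / K) * (1 / ((i:ℝ) + 1)) := by
      rw [Finset.range_eq_Ico, ← Finset.sum_Ico_consecutive _ (Nat.zero_le m) (le_of_lt hmK')]
      have hz : ∑ i ∈ Finset.Ico 0 m, ((i : ℝ) / K) * derd K m i = 0 := by
        apply Finset.sum_eq_zero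
        intro i hi
        simp only [Finset.mem_Ico] at hi
        have : derd K m i = 0 := by
          simp only [derd]
          rw [if_neg (by omega), if_neg (by omega)]
        simp [this]
      rw [hz, zero_add]
      apply Finset.sum_congr rfl
      intro i hi
      simp only [Finset.mem_Ico] at hi
      have hi0 : (0:ℝ) < i := by exact_mod_cast lt_of_lt_of_le hm1 hi.1
      have hd : derd K m i = ((m:ℝ) / K) * ((K:ℝ) / i - (K:ℝ) / (i + 1)) := by
        simp only [derd]
        rw [if_neg (by omega), if_pos ⟨hi.1, by omega⟩]
      rw [hd]
      have hi1 : (0:ℝ) < (i:ℝ) + 1 := by positivity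
      field_simp
      ring
    rw [h1, h2, ← Finset.mul_sum]
    ring
  rw [hsum]
  have hc : (0:ℝ) ≤ (m:ℝ) / K := by positivity
  have hup : ∑ i ∈ Finset.Ico m K, (1:ℝ) / ((i:ℝ) + 1) ≤ Real.log ((K:ℝ) / m) := by
    calc ∑ i ∈ Finset.Ico m K, (1:ℝ) / ((i:ℝ) + 1)
        ≤ ∑ i ∈ Finset.Ico m K, ((fun j : ℕ => Real.log j) (i + 1) - (fun j : ℕ => Real.log j) i) := by
          apply Finset.sum_le_sum
          intro i hi
          simp only [Finset.mem_Ico] at hi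
          have hi0 : (0:ℝ) < i := by exact_mod_cast lt_of_lt_of_le hm1 hi.1
          have hi1 : (0:ℝ) < (i:ℝ) + 1 := by positivity
          have h := Real.log_le_sub_one_of_pos (x := (i:ℝ) / ((i:ℝ) + 1)) (by positivity)
          rw [Real.log_div (ne_of_gt hi0) (ne_of_gt hi1)] at h
          have h' : (i:ℝ) / ((i:ℝ) + 1) - 1 = -(1 / ((i:ℝ) + 1)) := by field_simp; ring
          rw [h'] at h
          simp only [Nat.cast_add, Nat.cast_one]
          linarith
      _ = Real.log K - Real.log m := by
          rw [derd_telescope (fun j : ℕ => Real.log j) (le_of_lt hmK')]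
      _ = Real.log ((K:ℝ) / m) := (Real.log_div (ne_of_gt hK0) (ne_of_gt hm0)).symm
  have hlo : Real.log (((K:ℝ) + 1) / ((m:ℝ) + 1)) ≤ ∑ i ∈ Finset.Ico m K, (1:ℝ) / ((i:ℝ) + 1) := by
    calc Real.log (((K:ℝ) + 1) / ((m:ℝ) + 1))
        = Real.log ((K:ℝ) + 1) - Real.log ((m:ℝ) + 1) := by
          rw [Real.log_div (by positivity) (by positivity)]
      _ = ∑ i ∈ Finset.Ico m K, ((fun j : ℕ => Real.log (j + 1)) (i + 1) - (fun j : ℕ => Real.log (j + 1)) i) := by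
          rw [derd_telescope (fun j : ℕ => Real.log (j + 1)) (le_of_lt hmK')]
      _ ≤ ∑ i ∈ Finset.Ico m K, (1:ℝ) / ((i:ℝ) + 1) := by
          apply Finset.sum_le_sum
          intro i hi
          simp only [Finset.mem_Ico] at hi
          have hi1 : (0:ℝ) < (i:ℝ) + 1 := by positivity
          have hi2 : (0:ℝ) < (i:ℝ) + 2 := by positivity
          have h := Real.log_le_sub_one_of_pos (x := ((i:ℝ) + 2) / ((i:ℝ) + 1)) (by positivity)
          rw [Real.log_div (ne_of_gt hi2) (ne_of_gt hi1)] at h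
          have h' : ((i:ℝ) + 2) / ((i:ℝ) + 1) - 1 = 1 / ((i:ℝ) + 1) := by field_simp; ring
          rw [h'] at h
          simp only [Nat.cast_add, Nat.cast_one]
          have e : (i:ℝ) + 1 + 1 = (i:ℝ) + 2 := by ring
          rw [e]
          linarith
  constructor
  · exact mul_le_mul_of_nonneg_left (add_le_add_left hlo 1) hc
  · exact mul_le_mul_of_nonneg_left (add_le_add_left hup 1) hc
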